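/- For all θ in the open interval (0, π/3), we have π·sin(2θ) + 3√3·θ − 3π·sin(θ) > 0. -/

import Mathlib

open Real

noncomputable def gfun : ℝ → ℝ := fun θ => π * Real.sin (2*θ) + 3 * Real.sqrt 3 * θ - 3 * π * Real.sin θ

lemma gfun_hasDerivAt (θ : ℝ) :
    HasDerivAt gfun (2 * π * Real.cos (2*θ) + 3 * Real.sqrt 3 - 3 * π * Real.cos θ) θ := by
  have h1 : HasDerivAt (fun θ : ℝ => Real.sin (2*θ)) (Real.cos (2*θ) * 2) θ :=
    (Real.hasDerivAt_sin (2*θ)).comp θ (by simpa using (hasDerivAt_id θ).const_mul 2)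
  have h2 := ((h1.const_mul π).add ((hasDerivAt_id θ).const_mul (3 * Real.sqrt 3))).sub
    ((Real.hasDerivAt_sin θ).const_mul (3 * π))
  exact h2.congr_deriv (by ring)

noncomputable def gfun' : ℝ → ℝ := fun θ => 2 * π * Real.cos (2*θ) + 3 * Real.sqrt 3 - 3 * π * Real.cos θ

lemma gfun'_hasDerivAt (θ : ℝ) :
    HasDerivAt gfun' (-(4 * π * Real.sin (2*θ)) + 3 * π * Real.sin θ) θ := by
  have h1 : HasDerivAt (fun θ : ℝ => Real.cos (2*θ)) (-Real.sin (2*θ) * 2) θ :=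
    (Real.hasDerivAt_cos (2*θ)).comp θ (by simpa using (hasDerivAt_id θ).const_mul 2)
  have h2 := ((h1.const_mul (2*π)).add (hasDerivAt_const θ (3 * Real.sqrt 3))).sub
    ((Real.hasDerivAt_cos θ).const_mul (3 * π))
  exact h2.congr_deriv (by ring)

lemma deriv_gfun : deriv gfun = gfun' := by
  funext θ
  exact (gfun_hasDerivAt θ).deriv

lemma strict_concave : StrictConcaveOn ℝ (Set.Icc (0:ℝ) (π/3)) gfun := by
  apply strictConcaveOn_of_deriv2_neg (convex_Icc _ _)
  · exact Continuous.continuousOn (by unfold gfun; fun_prop)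
  · intro x hx
    rw [interior_Icc] at hx
    obtain ⟨hx0, hx1⟩ := hx
    have hderiv2 : deriv^[2] gfun x = -(4 * π * Real.sin (2*x)) + 3 * π * Real.sin x := by
      show deriv (deriv gfun) x = _
      rw [deriv_gfun]
      exact (gfun'_hasDerivAt x).deriv
    rw [hderiv2, Real.sin_two_mul]
    have hπ := Real.pi_pos
    have hsx : 0 < Real.sin x := Real.sin_pos_of_pos_of_lt_pi hx0 (by linarith)
    have hcx : Real.cos x > 1/2 := by
      have := Real.cos_lt_cos_of_nonneg_of_le_pi (le_of_lt hx0) (by linarith) hx1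
      rwa [Real.cos_pi_div_three] at this
    nlinarith [mul_pos hπ hsx]

theorem stmt0 : ∀ θ ∈ Set.Ioo (0:ℝ) (π/3),
    π * Real.sin (2*θ) + 3 * Real.sqrt 3 * θ - 3 * π * Real.sin θ > 0 := by
  intro θ ⟨h0, h1⟩
  have hπ := Real.pi_pos
  set a : ℝ := 1 - 3*θ/π with ha_def
  set b : ℝ := 3*θ/π with hb_def
  have ha : 0 < a := by
    have : 3*θ/π < 1 := by rw [div_lt_one hπ]; linarith
    linarith
  have hb : 0 < b := by positivity
  have hab : a + b = 1 := by ring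
  have key := strict_concave.2 (x := 0) (y := π/3)
    (Set.left_mem_Icc.2 (by positivity)) (Set.right_mem_Icc.2 (by positivity))
    (by positivity) ha hb hab
  have hcomb : a • (0:ℝ) + b • (π/3) = θ := by
    simp only [smul_eq_mul, mul_zero, zero_add, hb_def]
    field_simp
  rw [hcomb] at key
  have hg0 : gfun 0 = 0 := by simp [gfun]
  have hg1 : gfun (π/3) = 0 := by
    have h2 : 2 * (π/3) = π - π/3 := by ring
    simp only [gfun, h2, Real.sin_pi_sub, Real.cos_pi_div_three, Real.sin_pi_div_three]
    ring
  rw [hg0, hg1] at key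
  simpa [gfun] using key
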